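/- Let C be a convex body in ℝ² and let D be a convex polygon (the convex hull of a finite point set, with nonempty interior) that is parallel to C: for every nonzero direction u ∈ ℝ², if the exposed face F(D,u) = {x ∈ D : ⟪x,u⟫ = sup_{y∈D} ⟪y,u⟫} contains more than one point, then the exposed face F(C,u) of C also contains more than one point. Then there exists a constant ρ > 0 (depending on C and D) such that for every n and every packing C₁,…,Cₙ in D of positive homothets of C (Cᵢ = vᵢ + μᵢ • C, μᵢ > 0) in which every Cᵢ intersects the frontier of D, one has ∑ᵢ μᵢ ≤ ρ. (Proposition 3: when D is parallel to C, the total perimeter of a boundary-touching packing is bounded independently of n.) -/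

import Mathlib

open MeasureTheory Metric Set

/-- The exposed face of `K` in direction `u`: the set of points of `K` maximizing the
inner product with `u`. -/
def expFace (K : Set (EuclideanSpace ℝ (Fin 2))) (u : EuclideanSpace ℝ (Fin 2)) :
    Set (EuclideanSpace ℝ (Fin 2)) :=
  {x ∈ K | ∀ y ∈ K, (inner ℝ y u : ℝ) ≤ inner ℝ x u}

/-- `K` has a side in direction `u` if the exposed face `F(K,u)` has more than one
point. -/
def HasSide (K : Set (EuclideanSpace ℝ (Fin 2))) (u : EuclideanSpace ℝ (Fin 2)) : Prop :=
  ∃ x ∈ expFace K u, ∃ y ∈ expFace K u, x ≠ y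

/-- `D` is parallel to `C` if whenever `D` has a side in some direction `u ≠ 0`, then `C`
also has a side in direction `u`. -/
def ParallelTo (D C : Set (EuclideanSpace ℝ (Fin 2))) : Prop :=
  ∀ u : EuclideanSpace ℝ (Fin 2), u ≠ 0 → HasSide D u → HasSide C u

set_option maxHeartbeats 2000000
open scoped RealInnerProductSpace

noncomputable section
abbrev E2 := EuclideanSpace ℝ (Fin 2)

def perp (v : E2) : E2 := WithLp.toLp 2 ![-v 1, v 0]

lemma inner_eq_two (x y : E2) : ⟪x, y⟫ = x 0 * y 0 + x 1 * y 1 := by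
  simp [PiLp.inner_apply, Fin.sum_univ_two]; ring

lemma perp_apply0 (v : E2) : perp v 0 = -v 1 := rfl
lemma perp_apply1 (v : E2) : perp v 1 = v 0 := rfl

lemma inner_perp_self (v : E2) : ⟪perp v, v⟫ = 0 := by
  simp [inner_eq_two, perp_apply0, perp_apply1]; ring

lemma perp_neg (v : E2) : perp (-v) = - perp v := by
  ext i; fin_cases i <;> simp [perp]

lemma norm_perp (v : E2) : ‖perp v‖ = ‖v‖ := by
  rw [EuclideanSpace.norm_eq, EuclideanSpace.norm_eq]
  simp [Fin.sum_univ_two, perp_apply0, perp_apply1]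
  ring_nf

lemma perp_eq_zero {v : E2} : perp v = 0 ↔ v = 0 := by
  constructor
  · intro h
    have h0 : perp v 0 = 0 := by rw [h]; rfl
    have h1 : perp v 1 = 0 := by rw [h]; rfl
    ext i; fin_cases i
    · simpa [perp] using h1
    · simpa [perp] using h0
  · rintro rfl; ext i; fin_cases i <;> simp [perp]

lemma perp_span {u v : E2} (hu : u ≠ 0) (hv : ⟪v, u⟫ = 0) : ∃ r : ℝ, v = r • perp u := by
  rw [inner_eq_two] at hv
  by_cases h0 : u 0 ≠ 0
  · refine ⟨v 1 / u 0, ?_⟩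
    ext i; fin_cases i
    · show v 0 = (v 1 / u 0) * (-(u 1))
      field_simp
      nlinarith [hv]
    · show v 1 = (v 1 / u 0) * (u 0)
      field_simp
  · push_neg at h0
    have h1 : u 1 ≠ 0 := by
      intro h1; apply hu; ext i; fin_cases i <;> simp [h0, h1]
    refine ⟨-(v 0) / u 1, ?_⟩
    ext i; fin_cases i
    · show v 0 = (-(v 0) / u 1) * (-(u 1))
      field_simp
    · show v 1 = (-(v 0) / u 1) * (u 0)
      rw [h0] at hv ⊢
      have : v 1 * u 1 = 0 := by linarith
      rcases mul_eq_zero.1 this with h | h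
      · simp [h]
      · exact absurd h h1

def udir (p : E2 × E2) : E2 := ‖perp (p.2 - p.1)‖⁻¹ • perp (p.2 - p.1)

-- basic face lemmas
lemma expFace_subset (K : Set E2) (u : E2) : expFace K u ⊆ K := fun _ h => h.1

lemma inner_eq_of_mem_expFace {K : Set E2} {u x y : E2} (hx : x ∈ expFace K u)
    (hy : y ∈ expFace K u) : ⟪x, u⟫ = ⟪y, u⟫ :=
  le_antisymm (hy.2 x hx.1) (hx.2 y hy.1)

lemma convex_expFace {K : Set E2} (hK : Convex ℝ K) (u : E2) : Convex ℝ (expFace K u) := by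
  intro x hx y hy a b ha hb hab
  refine ⟨hK hx.1 hy.1 ha hb hab, fun z hz => ?_⟩
  have h1 := hx.2 z hz
  have h2 := hy.2 z hz
  have : ⟪a • x + b • y, u⟫ = a * ⟪x, u⟫ + b * ⟪y, u⟫ := by
    rw [inner_add_left, real_inner_smul_left, real_inner_smul_left]
  rw [this]
  have e1 : (⟪z, u⟫ : ℝ) = a * ⟪z, u⟫ + b * ⟪z, u⟫ := by
    linear_combination (-(⟪z, u⟫ : ℝ)) * hab
  rw [e1]
  exact add_le_add (mul_le_mul_of_nonneg_left h1 ha) (mul_le_mul_of_nonneg_left h2 hb)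

lemma expFace_smul_pos {K : Set E2} {u : E2} {r : ℝ} (hr : 0 < r) :
    expFace K (r • u) = expFace K u := by
  ext x
  simp only [expFace, Set.mem_setOf_eq, real_inner_smul_right]
  constructor
  · rintro ⟨hx, h⟩
    exact ⟨hx, fun y hy => le_of_mul_le_mul_left (h y hy) hr⟩
  · rintro ⟨hx, h⟩
    exact ⟨hx, fun y hy => mul_le_mul_of_nonneg_left (h y hy) hr.le⟩

lemma expFace_homothet {C : Set E2} {u v z : E2} {μ : ℝ} (hμ : 0 < μ)
    (hz : z ∈ expFace C u) : v + μ • z ∈ expFace ((fun x => v + μ • x) '' C) u := by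
  refine ⟨⟨z, hz.1, rfl⟩, ?_⟩
  rintro y ⟨w, hw, rfl⟩
  simp only [inner_add_left, real_inner_smul_left]
  have := hz.2 w hw
  nlinarith

lemma expFace_mono_of_touch {K D : Set E2} {u x₀ : E2} (hKD : K ⊆ D)
    (hx₀ : x₀ ∈ K) (hx₀D : x₀ ∈ expFace D u) : expFace K u ⊆ expFace D u := by
  intro z hz
  refine ⟨hKD hz.1, fun y hy => ?_⟩
  calc (⟪y, u⟫ : ℝ) ≤ ⟪x₀, u⟫ := hx₀D.2 y hy
    _ ≤ ⟪z, u⟫ := hz.2 x₀ hx₀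

-- max over convex hull
lemma inner_le_on_convexHull {V : Set E2} {u : E2} {c : ℝ}
    (h : ∀ v ∈ V, ⟪v, u⟫ ≤ c) {x : E2} (hx : x ∈ convexHull ℝ V) : ⟪x, u⟫ ≤ c := by
  have hconv : Convex ℝ {y : E2 | ⟪y, u⟫ ≤ c} :=
    convex_halfSpace_le ⟨fun a b => inner_add_left a b u, fun r a => real_inner_smul_left a u r⟩ c
  exact convexHull_min h hconv hx

-- strict inequality at interior points
lemma inner_lt_of_interior {K : Set E2} {u z : E2} {c : ℝ} (hu : u ≠ 0)
    (hK : ∀ x ∈ K, ⟪x, u⟫ ≤ c) (hz : z ∈ interior K) : ⟪z, u⟫ < c := by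
  obtain ⟨ε, hε, hball⟩ := Metric.isOpen_iff.1 isOpen_interior z hz
  have hmem : z + (ε / 2 * ‖u‖⁻¹) • u ∈ K := by
    apply interior_subset; apply hball
    rw [mem_ball_iff_norm]
    have hn : ‖u‖ ≠ 0 := norm_ne_zero_iff.2 hu
    simp only [add_sub_cancel_left, norm_smul, Real.norm_eq_abs]
    rw [abs_of_pos (by positivity)]
    rw [mul_assoc, inv_mul_cancel₀ hn, mul_one]
    linarith
  have := hK _ hmem
  rw [inner_add_left, real_inner_smul_left, real_inner_self_eq_norm_sq] at this
  have hn : 0 < ‖u‖ := norm_pos_iff.2 hu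
  have heq : ‖u‖⁻¹ * ‖u‖ ^ 2 = ‖u‖ := by field_simp
  nlinarith

-- convex set with nonempty interior is contained in closure of its interior
lemma subset_closure_interior {K : Set E2} (hK : Convex ℝ K)
    (hne : (interior K).Nonempty) : K ⊆ closure (interior K) := by
  obtain ⟨z, hz⟩ := hne
  intro y hy
  have htend : Filter.Tendsto (fun t : ℝ => (1 - t) • y + t • z)
      (nhdsWithin 0 (Set.Ioo (0:ℝ) 1)) (nhds y) := by
    have hcont : Continuous (fun t : ℝ => (1 - t) • y + t • z) := by continuity
    have := hcont.tendsto 0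
    simp only [sub_zero, one_smul, zero_smul, add_zero] at this
    exact this.mono_left nhdsWithin_le_nhds
  haveI : (nhdsWithin (0:ℝ) (Set.Ioo (0:ℝ) 1)).NeBot := by
    apply mem_closure_iff_nhdsWithin_neBot.1
    rw [closure_Ioo (by norm_num : (0:ℝ) ≠ 1)]
    exact ⟨le_refl 0, by norm_num⟩
  apply mem_closure_of_tendsto htend
  filter_upwards [self_mem_nhdsWithin] with t ht
  exact hK.combo_self_interior_mem_interior (a := 1 - t) (b := t) hy hz (by linarith [ht.2]) ht.1 (by ring)

lemma key_interior {K : Set E2} (hK : Convex ℝ K) {u : E2} (hu : u ≠ 0) {c : ℝ}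
    (hKc : ∀ x ∈ K, ⟪x, u⟫ ≤ c) {p q : E2} (hp : p ∈ K) (hq : q ∈ K) (hpq : p ≠ q)
    (hpc : ⟪p, u⟫ = c) (hqc : ⟪q, u⟫ = c) {z : E2} (hz : z ∈ interior K) :
    ∃ δ₀ > 0, ∀ δ : ℝ, 0 < δ → δ ≤ δ₀ →
      ((1/2 : ℝ) • (p + q)) - (δ * (‖u‖⁻¹ * ‖u‖⁻¹)) • u ∈ interior K := by
  have hν : (0:ℝ) < ‖u‖ ^ 2 := pow_pos (norm_pos_iff.2 hu) 2
  have hνne : (‖u‖ : ℝ) ^ 2 ≠ 0 := ne_of_gt hν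
  have heu : ⟪q - p, u⟫ = 0 := by rw [inner_sub_left, hpc, hqc]; ring
  have hmu : ⟪(1/2 : ℝ) • (p + q), u⟫ = c := by
    rw [real_inner_smul_left, inner_add_left, hpc, hqc]; ring
  have hτpos : 0 < c - ⟪z, u⟫ := sub_pos.2 (inner_lt_of_interior hu hKc hz)
  set τ : ℝ := c - ⟪z, u⟫ with hτdef
  have hτne : τ ≠ 0 := ne_of_gt hτpos
  have hζu : ⟪z - (1/2 : ℝ) • (p + q) - (⟪z - (1/2 : ℝ) • (p + q), u⟫ / ‖u‖ ^ 2) • u, u⟫ = 0 := by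
    rw [inner_sub_left, real_inner_smul_left, real_inner_self_eq_norm_sq]
    field_simp
    ring
  obtain ⟨r, hr⟩ := perp_span hu hζu
  obtain ⟨re, hre⟩ := perp_span hu heu
  have hzmu : ⟪z - (1/2 : ℝ) • (p + q), u⟫ = -τ := by rw [inner_sub_left, hmu, hτdef]; ring
  rw [hzmu] at hr
  have hre0 : re ≠ 0 := by
    rintro rfl
    rw [zero_smul] at hre
    exact hpq (sub_eq_zero.1 hre).symm
  set σ : ℝ := r / re with hσdef
  have hrp : r • perp u = σ • (q - p) := by
    rw [hσdef, hre, smul_smul, div_mul_cancel₀ _ hre0]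
  have hzeq : z = (1/2 : ℝ) • (p + q) + σ • (q - p) - (τ / ‖u‖ ^ 2) • u := by
    have h2 : z - (1/2 : ℝ) • (p + q) = σ • (q - p) + (-τ / ‖u‖ ^ 2) • u := by
      rw [← hrp, ← hr]; module
    have h3 : z = (σ • (q - p) + (-τ / ‖u‖ ^ 2) • u) + (1/2 : ℝ) • (p + q) := by
      rw [← h2]; module
    rw [h3]; module
  refine ⟨τ / (4 * (|σ| + 1)), by positivity, fun δ hδ hδ0 => ?_⟩
  set θ : ℝ := δ / τ with hθdef
  have hθpos : 0 < θ := by positivity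
  have hθle : θ ≤ 1 / (4 * (|σ| + 1)) := by
    rw [hθdef, div_le_div_iff₀ hτpos (by positivity)]
    have hkey : (τ / (4 * (|σ| + 1))) * (4 * (|σ| + 1)) = τ := by field_simp
    have h2 := mul_le_mul_of_nonneg_right hδ0 (show (0:ℝ) ≤ 4 * (|σ| + 1) by positivity)
    rw [hkey] at h2
    linarith
  have habs : 0 ≤ |σ| := abs_nonneg σ
  have hθ14 : θ ≤ 1 / 4 := le_trans hθle (by
    rw [div_le_div_iff₀ (by positivity) (by norm_num)]
    nlinarith)
  have h1θ : (3:ℝ)/4 ≤ 1 - θ := by linarith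
  have h1θpos : (0:ℝ) < 1 - θ := by linarith
  set c' : ℝ := -θ * σ / (1 - θ) with hc'def
  have hc'abs : |c'| ≤ 1/3 := by
    rw [hc'def, abs_div, abs_of_pos h1θpos]
    rw [div_le_iff₀ h1θpos]
    have h1 : |(-θ * σ)| = θ * |σ| := by rw [abs_mul, abs_neg, abs_of_pos hθpos]
    rw [h1]
    have h2 : θ * |σ| ≤ |σ| / (4 * (|σ| + 1)) := by
      rw [div_eq_mul_inv, mul_comm (|σ|)]
      exact mul_le_mul_of_nonneg_right (by rw [← one_div]; exact hθle) habs
    have h3 : |σ| / (4 * (|σ| + 1)) ≤ 1/3 * (3/4) := by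
      rw [div_le_iff₀ (by positivity)]
      nlinarith
    nlinarith
  -- the point y on the segment [p,q]
  have hyK : p + ((1:ℝ)/2 + c') • (q - p) ∈ K := by
    have hcomb := hK hp hq (a := 1 - (1/2 + c')) (b := 1/2 + c')
      (by obtain ⟨h1, h2⟩ := abs_le.1 hc'abs; linarith) (by obtain ⟨h1, h2⟩ := abs_le.1 hc'abs; linarith) (by ring)
    have : (1 - (1/2 + c')) • p + (1/2 + c') • q = p + ((1:ℝ)/2 + c') • (q - p) := by module
    rwa [this] at hcomb
  -- final combination
  have hmem := hK.combo_self_interior_mem_interior (a := 1 - θ) (b := θ) hyK hz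
    (by linarith) hθpos (by ring)
  have hfin : (1 - θ) • (p + ((1:ℝ)/2 + c') • (q - p)) + θ • z
      = ((1/2 : ℝ) • (p + q)) - (δ * (‖u‖⁻¹ * ‖u‖⁻¹)) • u := by
    rw [hzeq]
    have hinv : δ * (‖u‖⁻¹ * ‖u‖⁻¹) = θ * (τ / ‖u‖ ^ 2) := by
      rw [hθdef]; field_simp
    rw [hinv]
    have hc'eq : (1 - θ) * c' = -θ * σ := by
      rw [hc'def]; field_simp
    match_scalars
    · ring_nf
      linear_combination (-1 : ℝ) * hc'eq
    · ring_nf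
      linear_combination hc'eq
    · ring
  rwa [hfin] at hmem

lemma interior_homothet {C : Set E2} {v z : E2} {μ : ℝ} (hμ : 0 < μ) (hz : z ∈ interior C) :
    v + μ • z ∈ interior ((fun x => v + μ • x) '' C) := by
  obtain ⟨ε, hε, hball⟩ := Metric.isOpen_iff.1 isOpen_interior z hz
  apply mem_interior.2 ⟨ball (v + μ • z) (μ * ε), ?_, isOpen_ball, mem_ball_self (by positivity)⟩
  intro y hy
  refine ⟨μ⁻¹ • (y - v), ?_, by simp [smul_smul, mul_inv_cancel₀ (ne_of_gt hμ)]⟩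
  apply interior_subset; apply hball
  rw [mem_ball_iff_norm]
  have heq : μ⁻¹ • (y - v) - z = μ⁻¹ • (y - (v + μ • z)) := by
    match_scalars <;> field_simp
  rw [heq, norm_smul, Real.norm_eq_abs, abs_of_pos (inv_pos.2 hμ)]
  rw [mem_ball_iff_norm] at hy
  rw [inv_mul_lt_iff₀ hμ]
  linarith [hy]

/-- Every frontier point of a 2-D polytope lies on an exposed face containing two
distinct vertices. -/
lemma exists_edge (V : Finset E2) (hDint : (interior (convexHull ℝ (V : Set E2))).Nonempty)
    {x : E2} (hx : x ∈ frontier (convexHull ℝ (V : Set E2))) :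
    ∃ a ∈ V, ∃ b ∈ V, a ≠ b ∧ ∃ u : E2, u ≠ 0 ∧ ⟪b - a, u⟫ = 0 ∧
      x ∈ expFace (convexHull ℝ (V : Set E2)) u ∧
      a ∈ expFace (convexHull ℝ (V : Set E2)) u ∧
      b ∈ expFace (convexHull ℝ (V : Set E2)) u := by
  classical
  set D : Set E2 := convexHull ℝ (V : Set E2) with hDdef
  have hDconv : Convex ℝ D := convex_convexHull ℝ _
  have hDcl : IsClosed D := (V.finite_toSet.isCompact_convexHull ℝ).isClosed
  have hxD : x ∈ D := by
    have := hx.1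
    rwa [hDcl.closure_eq] at this
  have hxint : x ∉ interior D := hx.2
  obtain ⟨f, hf⟩ := geometric_hahn_banach_open_point (hDconv.interior) isOpen_interior hxint
  set u₀ : E2 := (InnerProductSpace.toDual ℝ E2).symm f with hu₀def
  have hu₀app : ∀ y : E2, ⟪y, u₀⟫ = f y := by
    intro y
    rw [real_inner_comm]
    exact InnerProductSpace.toDual_symm_apply
  have hu₀ : u₀ ≠ 0 := by
    obtain ⟨z₀, hz₀⟩ := hDint
    intro h0
    have h1 := hf z₀ hz₀
    have h2 : ⟪z₀, u₀⟫ = 0 := by rw [h0, inner_zero_right]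
    have h3 : ⟪x, u₀⟫ = 0 := by rw [h0, inner_zero_right]
    rw [hu₀app] at h2 h3
    rw [h2, h3] at h1
    exact lt_irrefl 0 h1
  have hsupp : ∀ y ∈ D, ⟪y, u₀⟫ ≤ ⟪x, u₀⟫ := by
    intro y hy
    have hyc : y ∈ closure (interior D) := subset_closure_interior hDconv hDint hy
    have hcl : closure (interior D) ⊆ {z : E2 | f z ≤ f x} := by
      apply closure_minimal
      · intro z hz; exact (hf z hz).le
      · exact isClosed_le (f.continuous) continuous_const
    rw [hu₀app, hu₀app]
    exact hcl hyc
  set c : ℝ := ⟪x, u₀⟫ with hcdef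
  have hVle : ∀ v ∈ V, ⟪v, u₀⟫ ≤ c := fun v hv => hsupp v (subset_convexHull ℝ _ hv)
  set W : Finset E2 := V.filter (fun v => ⟪v, u₀⟫ = c) with hWdef
  by_cases hW2 : ∃ a ∈ W, ∃ b ∈ W, a ≠ b
  · obtain ⟨a, ha, b, hb, hab⟩ := hW2
    have haV : a ∈ V := (Finset.mem_filter.1 ha).1
    have hbV : b ∈ V := (Finset.mem_filter.1 hb).1
    have hac : ⟪a, u₀⟫ = c := (Finset.mem_filter.1 ha).2
    have hbc : ⟪b, u₀⟫ = c := (Finset.mem_filter.1 hb).2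
    refine ⟨a, haV, b, hbV, hab, u₀, hu₀, ?_, ⟨hxD, fun y hy => hsupp y hy⟩,
      ⟨subset_convexHull ℝ _ haV, fun y hy => by rw [hac]; exact hsupp y hy⟩,
      ⟨subset_convexHull ℝ _ hbV, fun y hy => by rw [hbc]; exact hsupp y hy⟩⟩
    rw [inner_sub_left, hac, hbc]; ring
  · push_neg at hW2
    have hxhull : x ∈ convexHull ℝ (V : Set E2) := hxD
    rw [Finset.convexHull_eq] at hxhull
    obtain ⟨wgt, hwgt0, hwgt1, hwgtx⟩ := hxhull
    have hexp : (V.centerMass wgt id) = ∑ v ∈ V, wgt v • v := by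
      rw [Finset.centerMass_eq_of_sum_1 _ _ hwgt1]; rfl
    have hinner : ∑ v ∈ V, wgt v * ⟪v, u₀⟫ = c := by
      have : ⟪V.centerMass wgt id, u₀⟫ = c := by rw [hwgtx]
      rw [hexp, sum_inner] at this
      simp_rw [real_inner_smul_left] at this
      exact this
    have hsupport : ∀ v ∈ V, 0 < wgt v → ⟪v, u₀⟫ = c := by
      by_contra hcon
      push_neg at hcon
      obtain ⟨v₀, hv₀V, hv₀pos, hv₀ne⟩ := hcon
      have hv₀lt : ⟪v₀, u₀⟫ < c := lt_of_le_of_ne (hVle v₀ hv₀V) hv₀ne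
      have hstrict : ∑ v ∈ V, wgt v * ⟪v, u₀⟫ < ∑ v ∈ V, wgt v * c := by
        apply Finset.sum_lt_sum
        · intro i hi
          exact mul_le_mul_of_nonneg_left (hVle i hi) (hwgt0 i hi)
        · exact ⟨v₀, hv₀V, by nlinarith⟩
      rw [hinner, ← Finset.sum_mul, hwgt1, one_mul] at hstrict
      exact lt_irrefl c hstrict
    have hWne : W.Nonempty := by
      have : ∃ v ∈ V, 0 < wgt v := by
        by_contra hcon
        push_neg at hcon
        have : ∑ v ∈ V, wgt v = 0 := Finset.sum_eq_zero (fun v hv =>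
          le_antisymm (hcon v hv) (hwgt0 v hv))
        rw [hwgt1] at this; norm_num at this
      obtain ⟨v₀, hv₀V, hv₀pos⟩ := this
      exact ⟨v₀, Finset.mem_filter.2 ⟨hv₀V, hsupport v₀ hv₀V hv₀pos⟩⟩
    obtain ⟨w, hwW⟩ := hWne
    have hwV : w ∈ V := (Finset.mem_filter.1 hwW).1
    have hwc : ⟪w, u₀⟫ = c := (Finset.mem_filter.1 hwW).2
    have hWsingle : ∀ v ∈ W, v = w := fun v hv => hW2 v hv w hwW
    have hxw : x = w := by
      rw [← hwgtx, hexp]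
      have hterm : ∀ v ∈ V, wgt v • v = wgt v • w := by
        intro v hv
        rcases eq_or_lt_of_le (hwgt0 v hv) with h | h
        · rw [← h, zero_smul, zero_smul]
        · have : v ∈ W := Finset.mem_filter.2 ⟨hv, hsupport v hv h⟩
          rw [hWsingle v this]
      rw [Finset.sum_congr rfl hterm, ← Finset.sum_smul, hwgt1, one_smul]
    have hVlt : ∀ v ∈ V, v ≠ w → ⟪v, u₀⟫ < c := by
      intro v hv hne
      rcases lt_or_eq_of_le (hVle v hv) with h | h
      · exact h
      · exact absurd (hWsingle v (Finset.mem_filter.2 ⟨hv, h⟩)) hne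
    have hVne : (V.erase w).Nonempty := by
      rcases Finset.eq_empty_or_nonempty (V.erase w) with h | h
      · exfalso
        have hVsub : (V : Set E2) ⊆ {w} := by
          intro v hv
          by_contra hvx
          have hm : v ∈ V.erase w := Finset.mem_erase.2 ⟨hvx, hv⟩
          rw [h] at hm
          exact absurd hm (Finset.notMem_empty v)
        have hDsub : D ⊆ {w} := by
          rw [hDdef]
          exact convexHull_min (𝕜 := ℝ) hVsub (convex_singleton w)
        obtain ⟨z₀, hz₀⟩ := hDint
        obtain ⟨ε, hε, hball⟩ := Metric.isOpen_iff.1 isOpen_interior z₀ hz₀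
        have h1 : z₀ ∈ ({w} : Set E2) := hDsub (interior_subset hz₀)
        have h2 : z₀ + (ε/2) • EuclideanSpace.single (0 : Fin 2) (1:ℝ) ∈ ({w} : Set E2) := by
          apply hDsub; apply interior_subset; apply hball
          rw [mem_ball_iff_norm, add_sub_cancel_left, norm_smul, Real.norm_eq_abs,
            abs_of_pos (by linarith), EuclideanSpace.norm_single, Real.norm_eq_abs]
          norm_num; linarith
        rw [Set.mem_singleton_iff] at h1 h2
        rw [h1] at h2
        have h3 : (ε/2) • EuclideanSpace.single (0 : Fin 2) (1:ℝ) = (0 : E2) := by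
          have h6 := congrArg (fun y : E2 => y - w) h2
          simp only [add_sub_cancel_left, sub_self] at h6
          exact h6
        rcases smul_eq_zero.1 h3 with h4 | h4
        · linarith
        · have h5 := congrArg (fun y : E2 => y 0) h4
          simp only [EuclideanSpace.single_apply, if_pos rfl] at h5
          norm_num at h5
      · exact h
    -- vertex case: rotate the supporting direction to catch a second vertex
    set e : E2 := perp u₀ with hedef
    have heu : ⟪e, u₀⟫ = 0 := inner_perp_self u₀
    have he0 : e ≠ 0 := fun h => hu₀ (perp_eq_zero.1 h)
    -- maximize g over V.erase w
    obtain ⟨vs, hvsV, hvsmax⟩ := Finset.exists_max_image (V.erase w)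
      (fun v => ⟪v - w, e⟫ / (c - ⟪v, u₀⟫)) hVne
    have hvsV' : vs ∈ V := Finset.mem_of_mem_erase hvsV
    have hvsne : vs ≠ w := Finset.ne_of_mem_erase hvsV
    set M : ℝ := ⟪vs - w, e⟫ / (c - ⟪vs, u₀⟫) with hMdef
    set u₁ : E2 := e + M • u₀ with hu₁def
    have hu₁0 : u₁ ≠ 0 := by
      have h7 : ⟪u₀, e⟫ = 0 := by rw [real_inner_comm]; exact heu
      have h8 : ⟪u₁, e⟫ = ‖e‖ ^ 2 := by
        simp only [hu₁def, inner_add_left, real_inner_smul_left, h7,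
          real_inner_self_eq_norm_sq]
        ring
      intro h
      rw [h, inner_zero_left] at h8
      exact he0 (norm_eq_zero.1 (by nlinarith [norm_nonneg e]))
    -- key inequality : ∀ v ∈ V, ⟪v, u₁⟫ ≤ ⟪w, u₁⟫
    have hkey : ∀ v ∈ V, ⟪v - w, u₁⟫ ≤ 0 := by
      intro v hv
      rcases eq_or_ne v w with rfl | hne
      · simp
      · have hvV' : v ∈ V.erase w := Finset.mem_erase.2 ⟨hne, hv⟩
        have hd : 0 < c - ⟪v, u₀⟫ := sub_pos.2 (hVlt v hv hne)
        have hg := hvsmax v hvV'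
        have hvu : ⟪v - w, u₁⟫ = ⟪v - w, e⟫ - (c - ⟪v, u₀⟫) * M := by
          simp only [hu₁def, inner_add_right, real_inner_smul_right, inner_sub_left, hwc]
          ring
        rw [hvu]
        have := (div_le_iff₀ hd).1 hg
        linarith [this]
    have hkeyeq : ⟪vs - w, u₁⟫ = 0 := by
      have hd : 0 < c - ⟪vs, u₀⟫ := sub_pos.2 (hVlt vs hvsV' hvsne)
      have hvu : ⟪vs - w, u₁⟫ = ⟪vs - w, e⟫ - (c - ⟪vs, u₀⟫) * M := by
        simp only [hu₁def, inner_add_right, real_inner_smul_right, inner_sub_left, hwc]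
        ring
      rw [hvu, hMdef, mul_comm, div_mul_cancel₀ _ (ne_of_gt hd), sub_self]
    have hhull : ∀ y ∈ D, ⟪y, u₁⟫ ≤ ⟪w, u₁⟫ := by
      intro y hy
      apply inner_le_on_convexHull (V := (V : Set E2)) (fun v hv => ?_) hy
      have := hkey v hv
      rw [inner_sub_left] at this
      linarith
  -- conclude
    refine ⟨w, hwV, vs, hvsV', (Ne.symm hvsne), u₁, hu₁0, hkeyeq, ?_, ?_, ?_⟩
    · rw [hxw]
      exact ⟨hxw ▸ hxD, fun y hy => hhull y hy⟩
    · exact ⟨subset_convexHull ℝ _ hwV, fun y hy => hhull y hy⟩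
    · refine ⟨subset_convexHull ℝ _ hvsV', fun y hy => ?_⟩
      have : ⟪vs, u₁⟫ = ⟪w, u₁⟫ := by
        have := hkeyeq; rw [inner_sub_left] at this; linarith
      rw [this]
      exact hhull y hy

lemma convex_homothet {C : Set E2} (hC : Convex ℝ C) (v : E2) (μ : ℝ) :
    Convex ℝ ((fun x => v + μ • x) '' C) := by
  rintro _ ⟨a, ha, rfl⟩ _ ⟨b, hb, rfl⟩ s t hs ht hst
  refine ⟨s • a + t • b, hC ha hb hs ht hst, ?_⟩
  match_scalars
  · linarith
  · ring
  · ring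

/-- normalize a supporting direction orthogonal to `b - a` into the canonical finite family -/
lemma exists_udir_pair {K : Set E2} {a b u : E2} (hab : a ≠ b) (hu : u ≠ 0)
    (hperp : ⟪b - a, u⟫ = 0) :
    ∃ p : E2 × E2, (p = (a, b) ∨ p = (b, a)) ∧ udir p = ‖u‖⁻¹ • u := by
  have hba : b - a ≠ 0 := sub_ne_zero.2 (Ne.symm hab)
  have hnu : (0:ℝ) < ‖u‖ := norm_pos_iff.2 hu
  set w : E2 := ‖u‖⁻¹ • u with hwdef
  have hw1 : ‖w‖ = 1 := by
    rw [hwdef, norm_smul, Real.norm_eq_abs, abs_of_pos (by positivity),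
      inv_mul_cancel₀ (ne_of_gt hnu)]
  have hwperp : ⟪w, b - a⟫ = 0 := by
    rw [hwdef, real_inner_smul_left, real_inner_comm, hperp, mul_zero]
  obtain ⟨r, hr⟩ := perp_span hba hwperp
  have hpba : perp (b - a) ≠ 0 := fun h => hba (perp_eq_zero.1 h)
  have hnp : (0:ℝ) < ‖perp (b - a)‖ := norm_pos_iff.2 hpba
  have hrabs : |r| * ‖perp (b - a)‖ = 1 := by
    rw [← Real.norm_eq_abs, ← norm_smul, ← hr, hw1]
  have hr0 : r ≠ 0 := by
    intro h; rw [h] at hrabs; simp at hrabs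
  rcases lt_or_gt_of_ne hr0 with hneg | hpos
  · refine ⟨(b, a), Or.inr rfl, ?_⟩
    have : a - b = -(b - a) := (neg_sub b a).symm
    rw [udir, this, perp_neg, norm_neg]
    have hre : -r = ‖perp (b - a)‖⁻¹ := by
      rw [abs_of_neg hneg] at hrabs
      field_simp
      linarith
    rw [← hre, hr]
    module
  · refine ⟨(a, b), Or.inl rfl, ?_⟩
    have hre : r = ‖perp (b - a)‖⁻¹ := by
      rw [abs_of_pos hpos] at hrabs
      field_simp
      linarith
    rw [udir]
    simp only
    rw [← hre, hr]

/-- Proposition 3: If `D` is a convex polygon parallel to the convex body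
`C`, then there is `ρ > 0` (depending on `C` and `D`) such that for every packing of
positive homothets of `C` in `D`, all touching the frontier of `D`, the homothety factors
sum to at most `ρ`. -/
theorem parallel_polygon_boundary_packing_bounded
    (C D : Set (EuclideanSpace ℝ (Fin 2)))
    (hCconv : Convex ℝ C) (hCcpt : IsCompact C) (hCint : (interior C).Nonempty)
    (V : Finset (EuclideanSpace ℝ (Fin 2))) (hD : D = convexHull ℝ (V : Set _))
    (hDint : (interior D).Nonempty)
    (hpar : ParallelTo D C) :
    ∃ ρ : ℝ, 0 < ρ ∧ ∀ n : ℕ,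
      ∀ (v : Fin n → EuclideanSpace ℝ (Fin 2)) (μ : Fin n → ℝ),
        (∀ i, 0 < μ i) →
        (∀ i, (fun x => v i + μ i • x) '' C ⊆ D) →
        (∀ i j, i ≠ j →
          Disjoint (interior ((fun x => v i + μ i • x) '' C))
                   (interior ((fun x => v j + μ j • x) '' C))) →
        (∀ i, (((fun x => v i + μ i • x) '' C) ∩ frontier D).Nonempty) →
        ∑ i, μ i ≤ ρ := by
  classical
  have hDcpt : IsCompact D := hD ▸ V.finite_toSet.isCompact_convexHull ℝ
  obtain ⟨R₀, hR₀⟩ := hDcpt.isBounded.subset_closedBall 0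
  set R : ℝ := max R₀ 0 with hRdef
  have hR0 : 0 ≤ R := le_max_right _ _
  have hRD : ∀ x ∈ D, ‖x‖ ≤ R := by
    intro x hx
    have := hR₀ hx
    rw [mem_closedBall_zero_iff] at this
    exact le_trans this (le_max_left _ _)
  obtain ⟨z₀, hz₀⟩ := hCint
  -- choose two face points of C for each relevant direction
  have hselx : ∀ u : E2, ∃ pr : E2 × E2, u ≠ 0 → HasSide D u →
      pr.1 ∈ expFace C u ∧ pr.2 ∈ expFace C u ∧ pr.1 ≠ pr.2 := by
    intro u
    by_cases h : u ≠ 0 ∧ HasSide D u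
    · obtain ⟨xx, hxx, yy, hyy, hne⟩ := hpar u h.1 h.2
      exact ⟨(xx, yy), fun _ _ => ⟨hxx, hyy, hne⟩⟩
    · exact ⟨(0, 0), fun h1 h2 => absurd ⟨h1, h2⟩ h⟩
  choose sel hsel using hselx
  set dC : E2 × E2 → ℝ := fun p => dist (sel (udir p)).1 (sel (udir p)).2 with hdCdef
  refine ⟨1 + ∑ p ∈ V ×ˢ V, 2 * R / dC p, ?_, ?_⟩
  · have : 0 ≤ ∑ p ∈ V ×ˢ V, 2 * R / dC p :=
      Finset.sum_nonneg fun p _ => div_nonneg (by linarith) dist_nonneg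
    linarith
  intro n v μ hμ hsub hdisj htouch
  -- attach to each body a canonical supporting direction
  have hIdata : ∀ i : Fin n, ∃ p : E2 × E2, p ∈ V ×ˢ V ∧ udir p ≠ 0 ∧ HasSide D (udir p) ∧
      expFace ((fun x => v i + μ i • x) '' C) (udir p) ⊆ expFace D (udir p) := by
    intro i
    obtain ⟨x, hxCi, hxfr⟩ := htouch i
    have hDint' : (interior (convexHull ℝ (V : Set E2))).Nonempty := hD ▸ hDint
    have hxfr' : x ∈ frontier (convexHull ℝ (V : Set E2)) := hD ▸ hxfr
    obtain ⟨a, haV, b, hbV, hab, u₀, hu₀, hperp, hxF, haF, hbF⟩ := exists_edge V hDint' hxfr'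
    rw [← hD] at hxF haF hbF
    obtain ⟨p, hpor, hpud⟩ := exists_udir_pair (K := D) hab hu₀ hperp
    have hpmem : p ∈ V ×ˢ V := by
      rcases hpor with rfl | rfl <;> exact Finset.mem_product.2 ⟨by assumption, by assumption⟩
    have hpos : (0:ℝ) < ‖u₀‖⁻¹ := by
      have := norm_pos_iff.2 hu₀; positivity
    have hfeq : ∀ K : Set E2, expFace K (udir p) = expFace K u₀ := fun K => by
      rw [hpud]; exact expFace_smul_pos hpos
    have hune : udir p ≠ 0 := by
      rw [hpud]
      exact smul_ne_zero (ne_of_gt hpos) hu₀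
    refine ⟨p, hpmem, hune, ⟨a, ?_, b, ?_, hab⟩, ?_⟩
    · rw [hfeq D]; exact haF
    · rw [hfeq D]; exact hbF
    · rw [hfeq D, hfeq _]
      exact expFace_mono_of_touch (hsub i) hxCi hxF
  choose P hP using hIdata
  -- fiberwise decomposition
  have hfib : ∑ i, μ i = ∑ p ∈ V ×ˢ V, ∑ i ∈ Finset.univ.filter (fun i => P i = p), μ i :=
    (Finset.sum_fiberwise_of_maps_to (fun i _ => (hP i).1) μ).symm
  rw [hfib]
  -- per-class bound
  have hclass : ∀ p ∈ V ×ˢ V,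
      ∑ i ∈ Finset.univ.filter (fun i => P i = p), μ i ≤ 2 * R / dC p := by
    intro p hpV
    set T := Finset.univ.filter (fun i : Fin n => P i = p) with hTdef
    have hTP : ∀ i ∈ T, P i = p := fun i hi => (Finset.mem_filter.1 hi).2
    rcases T.eq_empty_or_nonempty with hT | ⟨i₀, hi₀⟩
    · rw [hT, Finset.sum_empty]
      exact div_nonneg (by linarith) dist_nonneg
    · obtain ⟨-, hu0, hside, -⟩ := (hTP i₀ hi₀) ▸ hP i₀
      set u : E2 := udir p with hudef
      obtain ⟨hXf, hYf, hXYne⟩ := hsel u hu0 hside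
      set X : E2 := (sel u).1 with hXdef
      set Y : E2 := (sel u).2 with hYdef
      have hd : 0 < dC p := dist_pos.2 hXYne
      have hu1 : ‖u‖ = 1 := by
        by_cases hΔ : perp (p.2 - p.1) = 0
        · exact absurd (by rw [hudef, udir, hΔ, smul_zero]) hu0
        · have hn : (0:ℝ) < ‖perp (p.2 - p.1)‖ := norm_pos_iff.2 hΔ
          rw [hudef, udir, norm_smul, Real.norm_eq_abs, abs_of_pos (by positivity),
            inv_mul_cancel₀ (ne_of_gt hn)]
      set e : E2 := perp u with hedef
      have he1 : ‖e‖ = 1 := by rw [hedef, norm_perp, hu1]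
      have hee : ⟪e, e⟫ = 1 := by rw [real_inner_self_eq_norm_sq, he1]; norm_num
      have heu : ⟪e, u⟫ = 0 := inner_perp_self u
      -- the faces of the homothets
      have hfs : ∀ i ∈ T, expFace ((fun x => v i + μ i • x) '' C) u ⊆ expFace D u := by
        intro i hi
        have := (hP i).2.2.2
        rwa [hTP i hi] at this
      set pp : Fin n → E2 := fun i => v i + μ i • X with hppdef
      set qq : Fin n → E2 := fun i => v i + μ i • Y with hqqdef
      have hppF : ∀ i ∈ T, pp i ∈ expFace D u := fun i hi =>
        hfs i hi (expFace_homothet (hμ i) hXf)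
      have hqqF : ∀ i ∈ T, qq i ∈ expFace D u := fun i hi =>
        hfs i hi (expFace_homothet (hμ i) hYf)
      set cmax : ℝ := ⟪pp i₀, u⟫ with hcdef
      have hcall : ∀ y ∈ D, ⟪y, u⟫ ≤ cmax := fun y hy => (hppF i₀ hi₀).2 y hy
      have hppc : ∀ i ∈ T, ⟪pp i, u⟫ = cmax :=
        fun i hi => inner_eq_of_mem_expFace (hppF i hi) (hppF i₀ hi₀)
      have hqqc : ∀ i ∈ T, ⟪qq i, u⟫ = cmax :=
        fun i hi => inner_eq_of_mem_expFace (hqqF i hi) (hppF i₀ hi₀)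
      -- rigid line geometry
      have huniq : ∀ z₁ z₂ : E2, ⟪z₂ - z₁, u⟫ = 0 → ⟪z₂ - z₁, e⟫ = 0 → z₂ = z₁ := by
        intro z₁ z₂ h1 h2
        obtain ⟨r, hr⟩ := perp_span hu0 h1
        rw [← hedef] at hr
        rw [hr, real_inner_smul_left, hee, mul_one] at h2
        rw [h2, zero_smul] at hr
        exact sub_eq_zero.1 hr
      have habsproj : ∀ z₁ z₂ : E2, ⟪z₂ - z₁, u⟫ = 0 → |⟪z₂ - z₁, e⟫| = ‖z₂ - z₁‖ := by
        intro z₁ z₂ h1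
        obtain ⟨r, hr⟩ := perp_span hu0 h1
        rw [← hedef] at hr
        rw [hr, real_inner_smul_left, hee, mul_one, norm_smul, he1, mul_one, Real.norm_eq_abs]
      -- intervals
      set aa : Fin n → ℝ := fun i => ⟪pp i, e⟫ with haadef
      set bb : Fin n → ℝ := fun i => ⟪qq i, e⟫ with hbbdef
      set I : Fin n → Set ℝ := fun i => uIcc (aa i) (bb i) with hIdef
      have hqp : ∀ i : Fin n, qq i - pp i = μ i • (Y - X) := by
        intro i; rw [hppdef, hqqdef]; simp only; module
      have hqpu : ∀ i : Fin n, ⟪qq i - pp i, u⟫ = 0 := by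
        intro i
        rw [hqp i, real_inner_smul_left, inner_sub_left,
          inner_eq_of_mem_expFace hYf hXf, sub_self, mul_zero]
      have hlen : ∀ i ∈ T, |bb i - aa i| = μ i * dC p := by
        intro i hi
        have h1 : bb i - aa i = ⟪qq i - pp i, e⟫ := by
          rw [haadef, hbbdef, inner_sub_left]
        rw [h1, habsproj _ _ (hqpu i), hqp i, norm_smul, Real.norm_eq_abs,
          abs_of_pos (hμ i), hdCdef]
        simp only
        rw [dist_eq_norm, ← hXdef, ← hYdef, norm_sub_rev]
      have hIsub : ∀ i ∈ T, I i ⊆ Icc (-R) R := by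
        intro i hi
        have hpa : |aa i| ≤ R := by
          have h2 : ‖pp i‖ ≤ R := hRD _ (expFace_subset D u (hppF i hi))
          calc |aa i| ≤ ‖pp i‖ * ‖e‖ := abs_real_inner_le_norm _ _
            _ = ‖pp i‖ := by rw [he1, mul_one]
            _ ≤ R := h2
        have hpb : |bb i| ≤ R := by
          have h2 : ‖qq i‖ ≤ R := hRD _ (expFace_subset D u (hqqF i hi))
          calc |bb i| ≤ ‖qq i‖ * ‖e‖ := abs_real_inner_le_norm _ _
            _ = ‖qq i‖ := by rw [he1, mul_one]
            _ ≤ R := h2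
        obtain ⟨ha1, ha2⟩ := abs_le.1 hpa
        obtain ⟨hb1, hb2⟩ := abs_le.1 hpb
        intro t ht
        rcases Set.mem_uIcc.1 ht with ⟨h1, h2⟩ | ⟨h1, h2⟩ <;>
          exact ⟨by linarith, by linarith⟩
      -- point on the face line with given projection
      have hpt : ∀ k ∈ T, ∀ t ∈ I k, ∃ Z : E2,
          Z ∈ (fun x => v k + μ k • x) '' C ∧ ⟪Z, u⟫ = cmax ∧ ⟪Z, e⟫ = t := by
        intro k hk t ht
        rw [hIdef] at ht
        simp only at ht
        rw [← segment_eq_uIcc] at ht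
        obtain ⟨α, β, hα, hβ, hαβ, habt⟩ := ht
        refine ⟨α • pp k + β • qq k, ?_, ?_, ?_⟩
        · have hCk : Convex ℝ ((fun x => v k + μ k • x) '' C) := convex_homothet hCconv _ _
          exact hCk (expFace_subset _ u (expFace_homothet (hμ k) hXf))
            (expFace_subset _ u (expFace_homothet (hμ k) hYf)) hα hβ hαβ
        · rw [inner_add_left, real_inner_smul_left, real_inner_smul_left,
            hppc k hk, hqqc k hk]
          linear_combination cmax * hαβ
        · rw [inner_add_left, real_inner_smul_left, real_inner_smul_left]
          exact habt
      -- pairwise a.e. disjointness of the intervals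
      have hpair : (↑T : Set (Fin n)).Pairwise (Function.onFun (AEDisjoint volume) I) := by
        intro i hiT j hjT hij
        have hiT' : i ∈ T := hiT
        have hjT' : j ∈ T := hjT
        show volume (I i ∩ I j) = 0
        by_cases hss : (I i ∩ I j).Subsingleton
        · rcases hss.eq_empty_or_singleton with h | ⟨t, h⟩
          · rw [h]; simp
          · rw [h]; simp
        · exfalso
          obtain ⟨t₁, ht₁, t₂, ht₂, htne⟩ := Set.not_subsingleton_iff.1 hss
          obtain ⟨Z₁, hZ₁C, hZ₁u, hZ₁e⟩ := hpt i hiT' t₁ ht₁.1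
          obtain ⟨Z₁', hZ₁'C, hZ₁'u, hZ₁'e⟩ := hpt j hjT' t₁ ht₁.2
          obtain ⟨Z₂, hZ₂C, hZ₂u, hZ₂e⟩ := hpt i hiT' t₂ ht₂.1
          obtain ⟨Z₂', hZ₂'C, hZ₂'u, hZ₂'e⟩ := hpt j hjT' t₂ ht₂.2
          have hZ₁eq : Z₁' = Z₁ := huniq _ _
            (by rw [inner_sub_left, hZ₁u, hZ₁'u, sub_self])
            (by rw [inner_sub_left, hZ₁e, hZ₁'e, sub_self])
          have hZ₂eq : Z₂' = Z₂ := huniq _ _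
            (by rw [inner_sub_left, hZ₂u, hZ₂'u, sub_self])
            (by rw [inner_sub_left, hZ₂e, hZ₂'e, sub_self])
          have hZne : Z₁ ≠ Z₂ := by
            intro h
            apply htne
            rw [← hZ₁e, ← hZ₂e, h]
          -- common interior point
          obtain ⟨δ₁, hδ₁, H₁⟩ := key_interior (convex_homothet hCconv (v i) (μ i)) hu0
            (fun x hx => hcall x (hsub i hx)) hZ₁C hZ₂C hZne hZ₁u hZ₂u
            (interior_homothet (hμ i) hz₀)
          obtain ⟨δ₂, hδ₂, H₂⟩ := key_interior (convex_homothet hCconv (v j) (μ j)) hu0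
            (fun x hx => hcall x (hsub j hx)) (hZ₁eq ▸ hZ₁'C) (hZ₂eq ▸ hZ₂'C) hZne hZ₁u hZ₂u
            (interior_homothet (hμ j) hz₀)
          have hmin : 0 < min δ₁ δ₂ := lt_min hδ₁ hδ₂
          have hYi := H₁ (min δ₁ δ₂) hmin (min_le_left _ _)
          have hYj := H₂ (min δ₁ δ₂) hmin (min_le_right _ _)
          exact Set.disjoint_left.1 (hdisj i j hij) hYi hYj
      -- measure bookkeeping
      have hmeas : ∑ i ∈ T, volume (I i) = volume (⋃ i ∈ T, I i) :=
        (measure_biUnion_finset₀ hpair (fun i _ => measurableSet_uIcc.nullMeasurableSet)).symm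
      have hle : volume (⋃ i ∈ T, I i) ≤ volume (Icc (-R) R) :=
        measure_mono (Set.iUnion₂_subset hIsub)
      rw [Real.volume_Icc] at hle
      have hvol : ∀ i ∈ T, volume (I i) = ENNReal.ofReal (μ i * dC p) := by
        intro i hi
        rw [hIdef]
        simp only
        rw [Real.volume_interval, hlen i hi]
      have hsum2 : ENNReal.ofReal (∑ i ∈ T, μ i * dC p) ≤ ENNReal.ofReal (R - -R) := by
        rw [ENNReal.ofReal_sum_of_nonneg (fun i _ => mul_nonneg (hμ i).le hd.le)]
        calc ∑ i ∈ T, ENNReal.ofReal (μ i * dC p) = ∑ i ∈ T, volume (I i) :=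
              Finset.sum_congr rfl (fun i hi => (hvol i hi).symm)
          _ = volume (⋃ i ∈ T, I i) := hmeas
          _ ≤ ENNReal.ofReal (R - -R) := hle
      have hsumreal : ∑ i ∈ T, μ i * dC p ≤ R - -R :=
        (ENNReal.ofReal_le_ofReal_iff (by linarith)).1 hsum2
      rw [← Finset.sum_mul] at hsumreal
      rw [le_div_iff₀ hd]
      linarith
  calc ∑ p ∈ V ×ˢ V, ∑ i ∈ Finset.univ.filter (fun i => P i = p), μ i
      ≤ ∑ p ∈ V ×ˢ V, 2 * R / dC p := Finset.sum_le_sum hclass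
    _ ≤ 1 + ∑ p ∈ V ×ˢ V, 2 * R / dC p := by linarith

end
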